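/- Let b ∈ (0,1], λ > 0 and M > 0 be real numbers with b·λ·M > 1. Then there exists a unique real number Q < 0 satisfying b·λ·e^{Q·M} = b·λ + Q, and this Q moreover satisfies −b·λ < Q < 0 (in particular b·λ + Q > 0). -/

import Mathlib

private lemma exp_le_quadratic_of_nonpos {x : ℝ} (hx : x ≤ 0) :
    Real.exp x ≤ 1 + x + x ^ 2 / 2 := by
  have h := Real.quadratic_le_exp_of_nonneg (neg_nonneg.2 hx)
  have hprod : Real.exp x * Real.exp (-x) = 1 := by
    rw [← Real.exp_add]; simp
  have hexp : 0 < Real.exp x := Real.exp_pos x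
  nlinarith [sq_nonneg (x ^ 2), mul_le_mul_of_nonneg_left h hexp.le]

private lemma no_three_roots (a M : ℝ) (ha : 0 < a) (hM : 0 < M)
    {x y z : ℝ} (hxy : x < y) (hyz : y < z)
    (hx : a * Real.exp (x * M) = a + x) (hy : a * Real.exp (y * M) = a + y)
    (hz : a * Real.exp (z * M) = a + z) : False := by
  have hzx : 0 < z - x := by linarith
  set t : ℝ := (z - y) / (z - x) with ht
  set s : ℝ := (y - x) / (z - x) with hs
  have ht0 : 0 < t := div_pos (by linarith) hzx
  have hs0 : 0 < s := div_pos (by linarith) hzx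
  have hts : t + s = 1 := by
    rw [ht, hs, ← add_div]
    rw [div_eq_one_iff_eq hzx.ne']
    ring
  have hne : x * M ≠ z * M := by
    intro h; exact absurd (mul_right_cancel₀ hM.ne' h) (by linarith)
  have hcvx := strictConvexOn_exp.2 (Set.mem_univ (x * M)) (Set.mem_univ (z * M))
    hne ht0 hs0 hts
  have hyxz : t * x + s * z = y := by
    rw [ht, hs]; field_simp; ring
  have hy' : t • (x * M) + s • (z * M) = y * M := by
    rw [smul_eq_mul, smul_eq_mul]; linear_combination M * hyxz
  rw [hy', smul_eq_mul, smul_eq_mul] at hcvx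
  have h2 : a * Real.exp (y * M) < t * (a * Real.exp (x * M)) + s * (a * Real.exp (z * M)) := by
    nlinarith
  rw [hx, hy, hz] at h2
  nlinarith

private lemma exists_neg_root (a M : ℝ) (ha : 0 < a) (hM : 0 < M)
    (haM : 1 < a * M) : ∃ Q : ℝ, Q < 0 ∧ a * Real.exp (Q * M) = a + Q := by
  set c : ℝ := (a * M - 1) / (a * M ^ 2) with hc
  clear_value c
  have hc0 : 0 < c := by
    rw [hc]; exact div_pos (by linarith) (by positivity)
  set Q0 : ℝ := -min (a / 2) c with hQ0
  clear_value Q0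
  have hQ0neg : Q0 < 0 := by
    rw [hQ0]; exact neg_lt_zero.mpr (lt_min (half_pos ha) hc0)
  have hQ0c : -c ≤ Q0 := by
    rw [hQ0]; exact neg_le_neg (min_le_right _ _)
  have hcM : c * (a * M ^ 2) = a * M - 1 := by
    rw [hc]; field_simp
  have hB : 0 < a * M - 1 + a * Q0 * M ^ 2 / 2 := by
    have h3 : a * M ^ 2 * (-c) ≤ a * M ^ 2 * Q0 :=
      mul_le_mul_of_nonneg_left hQ0c (by positivity)
    nlinarith
  have hfQ0 : a * Real.exp (Q0 * M) < a + Q0 := by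
    have hQ0M : Q0 * M ≤ 0 := mul_nonpos_of_nonpos_of_nonneg hQ0neg.le hM.le
    have h1 : a * Real.exp (Q0 * M) ≤ a * (1 + Q0 * M + (Q0 * M) ^ 2 / 2) :=
      mul_le_mul_of_nonneg_left (exp_le_quadratic_of_nonpos hQ0M) ha.le
    have h2 : Q0 * (a * M - 1 + a * Q0 * M ^ 2 / 2) < 0 :=
      mul_neg_of_neg_of_pos hQ0neg hB
    nlinarith
  have hfL : a + -a < a * Real.exp (-a * M) := by
    have : 0 < a * Real.exp (-a * M) := mul_pos ha (Real.exp_pos _)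
    linarith
  have hLQ0 : -a ≤ Q0 := by
    have : min (a / 2) c ≤ a := (min_le_left _ _).trans (by linarith)
    simp only [hQ0]; linarith
  have hcont : ContinuousOn (fun Q : ℝ => a * Real.exp (Q * M) - (a + Q))
      (Set.Icc (-a) Q0) :=
    (Continuous.sub
      (continuous_const.mul (Real.continuous_exp.comp (continuous_id.mul continuous_const)))
      (continuous_const.add continuous_id)).continuousOn
  have hmem : (0 : ℝ) ∈ Set.Icc
      (a * Real.exp (Q0 * M) - (a + Q0)) (a * Real.exp (-a * M) - (a + -a)) :=
    ⟨by linarith, by linarith⟩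
  obtain ⟨Q, hQmem, hfQ⟩ := intermediate_value_Icc' hLQ0 hcont hmem
  have hQroot : a * Real.exp (Q * M) = a + Q := by
    have : a * Real.exp (Q * M) - (a + Q) = 0 := hfQ
    linarith
  exact ⟨Q, lt_of_le_of_lt hQmem.2 hQ0neg, hQroot⟩

theorem root_equation_unique_negative_solution
    (b lam M : ℝ) (hb0 : 0 < b) (hb1 : b ≤ 1) (hlam : 0 < lam) (hM : 0 < M)
    (hpsi : 1 < b * lam * M) :
    (∃! Q : ℝ, Q < 0 ∧ b * lam * Real.exp (Q * M) = b * lam + Q) ∧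
    ∀ Q : ℝ, Q < 0 → b * lam * Real.exp (Q * M) = b * lam + Q →
      -(b * lam) < Q ∧ Q < 0 ∧ 0 < b * lam + Q := by
  have ha : 0 < b * lam := mul_pos hb0 hlam
  have hzero : b * lam * Real.exp ((0 : ℝ) * M) = b * lam + 0 := by simp
  obtain ⟨Q, hQneg, hQroot⟩ := exists_neg_root (b * lam) M ha hM hpsi
  constructor
  · refine ⟨Q, ⟨hQneg, hQroot⟩, ?_⟩
    rintro Q' ⟨hQ'neg, hQ'root⟩
    rcases lt_trichotomy Q' Q with h | h | h
    · exact absurd (no_three_roots (b * lam) M ha hM h hQneg hQ'root hQroot hzero) not_false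
    · exact h
    · exact absurd (no_three_roots (b * lam) M ha hM h hQ'neg hQroot hQ'root hzero) not_false
  · intro Q' hQ'neg hQ'root
    have hpos : 0 < b * lam + Q' := hQ'root ▸ mul_pos ha (Real.exp_pos _)
    exact ⟨by linarith, hQ'neg, hpos⟩
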